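/- Let k ≥ 2. Color each edge {v,w} of ST_k^2 with the unique position i ∈ {1,…,2k−1} such that w is obtained from v by transposing positions 0 and i, and color each vertex v with the unique σ(v) ∈ {1,…,2k−1} such that v_{σ(v)} = v_0. Then this assignment is a total coloring of ST_k^2 with color set {1,…,2k−1}, and it is efficient: for every vertex v, the 2k−1 vertex colors assigned to v and its 2k−2 neighbors are pairwise distinct, hence comprise all of {1,…,2k−1}. Moreover the vertex color class of color i is exactly Σ_i^k. -/

import Mathlib

/-- A string of length `k*l` over the alphabet `Fin k` in which every symbol
occurs exactly `l` times (an `l`-set permutation). -/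
def IsMSP (k l : ℕ) (v : Fin (k * l) → Fin k) : Prop :=
  ∀ a : Fin k, (Finset.univ.filter fun i => v i = a).card = l

/-- The vertex set of the star `l`-set transposition graph `ST_k^l`. -/
abbrev MSP (k l : ℕ) : Type := {v : Fin (k * l) → Fin k // IsMSP k l v}

/-- Star-transposition adjacency: `w` is obtained from `v` by transposing position `0`
with a position `i ≠ 0` whose entry differs from that of position `0`. -/
def STAdj (k l : ℕ) (v w : Fin (k * l) → Fin k) : Prop :=
  ∃ i j : Fin (k * l), (j : ℕ) = 0 ∧ i ≠ j ∧ v i ≠ v j ∧ w = v ∘ Equiv.swap j i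

/-- The star `l`-set transposition graph `ST_k^l`. -/
def STGraph (k l : ℕ) : SimpleGraph (MSP k l) :=
  SimpleGraph.fromRel fun v w => STAdj k l v.1 w.1

lemma isMSP_comp {k l : ℕ} {v : Fin (k * l) → Fin k} (hv : IsMSP k l v)
    (e : Equiv.Perm (Fin (k * l))) : IsMSP k l (v ∘ e) := by
  intro a
  exact (Finset.card_equiv e (by simp)).trans (hv a)

lemma two_uniq {k : ℕ} (v : MSP k 2) (p a b : Fin (k * 2))
    (ha : a ≠ p) (hb : b ≠ p) (hva : v.1 a = v.1 p) (hvb : v.1 b = v.1 p) : a = b := by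
  by_contra hab
  have hcard := v.2 (v.1 p)
  have h2 : 2 < (Finset.univ.filter fun i => v.1 i = v.1 p).card := by
    refine Finset.two_lt_card.2 ⟨p, ?_, a, ?_, b, ?_, Ne.symm ha, Ne.symm hb, hab⟩ <;>
      simp [hva, hvb]
  omega

lemma other_pos {k : ℕ} (v : MSP k 2) (p : Fin (k * 2)) :
    ∃ q, q ≠ p ∧ v.1 q = v.1 p := by
  have hcard := v.2 (v.1 p)
  have h1 : 1 < (Finset.univ.filter fun i => v.1 i = v.1 p).card := by omega
  obtain ⟨a, ha, b, hb, hab⟩ := Finset.one_lt_card.1 h1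
  simp only [Finset.mem_filter] at ha hb
  by_cases hap : a = p
  · exact ⟨b, fun h => hab (hap.trans h.symm), hb.2⟩
  · exact ⟨a, hap, ha.2⟩

lemma adj_repr {k : ℕ} (hk : 2 ≤ k) {v w : MSP k 2} (h : (STGraph k 2).Adj v w) :
    ∃ i : Fin (k * 2), (i : ℕ) ≠ 0 ∧ v.1 i ≠ v.1 ⟨0, Nat.mul_pos (by omega) two_pos⟩ ∧
      w.1 = v.1 ∘ Equiv.swap ⟨0, Nat.mul_pos (by omega) two_pos⟩ i := by
  have hz : 0 < k * 2 := by omega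
  rw [STGraph, SimpleGraph.fromRel_adj] at h
  obtain ⟨hne, h | h⟩ := h
  · obtain ⟨i, j, hj, hij, hvij, heq⟩ := h
    have hj' : j = (⟨0, hz⟩ : Fin (k * 2)) := Fin.ext hj
    subst hj'
    exact ⟨i, fun h0 => hij (Fin.ext h0), hvij, heq⟩
  · obtain ⟨i, j, hj, hij, hwij, heq⟩ := h
    have hj' : j = (⟨0, hz⟩ : Fin (k * 2)) := Fin.ext hj
    subst hj'
    have heq' : w.1 = v.1 ∘ Equiv.swap ⟨0, hz⟩ i := by
      rw [heq]; funext x; simp [Function.comp, Equiv.swap_apply_self]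
    have h1 : v.1 i = w.1 ⟨0, hz⟩ := by rw [heq]; simp
    have h2 : v.1 ⟨0, hz⟩ = w.1 i := by rw [heq]; simp
    refine ⟨i, fun h0 => hij (Fin.ext h0), ?_, heq'⟩
    rw [h1, h2]
    exact Ne.symm hwij

lemma adj_of {k : ℕ} (hk : 2 ≤ k) (v w : MSP k 2) (i : Fin (k * 2)) (hi : (i : ℕ) ≠ 0)
    (hvi : v.1 i ≠ v.1 ⟨0, Nat.mul_pos (by omega) two_pos⟩) (heq : w.1 = v.1 ∘ Equiv.swap ⟨0, Nat.mul_pos (by omega) two_pos⟩ i) :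
    (STGraph k 2).Adj v w := by
  rw [STGraph, SimpleGraph.fromRel_adj]
  constructor
  · rintro rfl
    have := congrFun heq ⟨0, Nat.mul_pos (by omega) two_pos⟩
    simp at this
    exact hvi this.symm
  · exact Or.inl ⟨i, ⟨0, Nat.mul_pos (by omega) two_pos⟩, rfl, fun h => hi (by rw [h]), hvi, heq⟩

lemma repr_ne {k : ℕ} (hk : 2 ≤ k) (v w : MSP k 2) (i : Fin (k * 2)) (hvw : v ≠ w)
    (heq : w.1 = v.1 ∘ Equiv.swap ⟨0, Nat.mul_pos (by omega) two_pos⟩ i) :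
    (i : ℕ) ≠ 0 ∧ v.1 i ≠ v.1 ⟨0, Nat.mul_pos (by omega) two_pos⟩ := by
  constructor
  · intro h0
    apply hvw
    apply Subtype.ext
    have hi : i = (⟨0, Nat.mul_pos (by omega) two_pos⟩ : Fin (k * 2)) := Fin.ext h0
    rw [heq, hi, Equiv.swap_self]
    rfl
  · intro hvi
    apply hvw
    apply Subtype.ext
    rw [heq]
    funext x
    rcases eq_or_ne x ⟨0, Nat.mul_pos (by omega) two_pos⟩ with rfl | hx0
    · simpa using hvi.symm
    · rcases eq_or_ne x i with rfl | hxi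
      · simpa using hvi
      · simp [Equiv.swap_apply_of_ne_of_ne hx0 hxi]

theorem stmt13 (k : ℕ) (hk : 2 ≤ k)
    (sig : MSP k 2 → Fin (k * 2))
    (hsig : ∀ v : MSP k 2, (sig v : ℕ) ≠ 0 ∧ v.1 (sig v) = v.1 ⟨0, by omega⟩) :
    (∀ v w : MSP k 2, (STGraph k 2).Adj v w → sig v ≠ sig w) ∧
    (∀ (u v w : MSP k 2) (i j : Fin (k * 2)),
      (STGraph k 2).Adj u v → (STGraph k 2).Adj u w → v ≠ w →
      v.1 = u.1 ∘ Equiv.swap ⟨0, by omega⟩ i →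
      w.1 = u.1 ∘ Equiv.swap ⟨0, by omega⟩ j → i ≠ j) ∧
    (∀ (v w : MSP k 2) (i : Fin (k * 2)), (STGraph k 2).Adj v w →
      w.1 = v.1 ∘ Equiv.swap ⟨0, by omega⟩ i → sig v ≠ i ∧ sig w ≠ i) ∧
    (∀ v : MSP k 2, Set.InjOn sig (insert v ((STGraph k 2).neighborSet v))) ∧
    (∀ v : MSP k 2, ∀ c : Fin (k * 2), (c : ℕ) ≠ 0 →
      ∃ w ∈ insert v ((STGraph k 2).neighborSet v), sig w = c) ∧
    (∀ i : Fin (k * 2), (i : ℕ) ≠ 0 →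
      {v : MSP k 2 | sig v = i} = {v : MSP k 2 | v.1 ⟨0, by omega⟩ = v.1 i}) := by
  have hz : 0 < k * 2 := by omega
  have huniq : ∀ (v : MSP k 2) (s : Fin (k * 2)), (s : ℕ) ≠ 0 →
      v.1 s = v.1 ⟨0, by omega⟩ → s = sig v := by
    intro v s hs0 hs
    exact two_uniq v ⟨0, by omega⟩ s (sig v)
      (fun h => hs0 (by rw [h])) (fun h => (hsig v).1 (by rw [h])) hs (hsig v).2
  have hdiff : ∀ v w : MSP k 2, (STGraph k 2).Adj v w → sig v ≠ sig w := by
    intro v w hadj hne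
    obtain ⟨i, hi0, hvi, heq⟩ := adj_repr hk hadj
    have hwz : w.1 ⟨0, by omega⟩ = v.1 i := by rw [heq]; simp
    have hs := (hsig w).2
    rw [hwz, ← hne] at hs
    by_cases hcase : sig v = i
    · rw [hcase] at hs
      have hwi : w.1 i = v.1 ⟨0, by omega⟩ := by rw [heq]; simp
      rw [hwi] at hs
      exact hvi hs.symm
    · have hsz : sig v ≠ (⟨0, by omega⟩ : Fin (k * 2)) := fun h => (hsig v).1 (by rw [h])
      have hws : w.1 (sig v) = v.1 (sig v) := by
        rw [heq]; simp [Equiv.swap_apply_of_ne_of_ne hsz hcase]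
      rw [hws, (hsig v).2] at hs
      exact hvi hs.symm
  refine ⟨hdiff, ?_, ?_, ?_, ?_, ?_⟩
  · -- proper edge coloring
    intro u v w i j _ _ hvw hv hw hij
    exact hvw (Subtype.ext (by rw [hv, hw, hij]))
  · -- vertex-edge
    intro v w i hadj heq
    obtain ⟨hi0, hvi⟩ := repr_ne hk v w i hadj.ne heq
    constructor
    · intro h
      apply hvi
      rw [← h]
      exact (hsig v).2
    · intro h
      have h1 : w.1 i = v.1 ⟨0, by omega⟩ := by rw [heq]; simp
      have h2 : w.1 ⟨0, by omega⟩ = v.1 i := by rw [heq]; simp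
      have hs := (hsig w).2
      rw [h, h1, h2] at hs
      exact hvi hs.symm
  · -- injectivity on closed neighborhoods
    intro v x hx y hy hxy
    rcases Set.mem_insert_iff.1 hx with rfl | hx
    · rcases Set.mem_insert_iff.1 hy with rfl | hy
      · rfl
      · exact absurd hxy (hdiff x y hy)
    · rcases Set.mem_insert_iff.1 hy with rfl | hy
      · exact absurd hxy.symm (hdiff y x hx)
      · obtain ⟨i1, hi1, hvi1, he1⟩ := adj_repr hk hx
        obtain ⟨i2, hi2, hvi2, he2⟩ := adj_repr hk hy
        obtain ⟨t1, ht1, hvt1⟩ := other_pos v i1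
        obtain ⟨t2, ht2, hvt2⟩ := other_pos v i2
        have ht1z : t1 ≠ (⟨0, hz⟩ : Fin (k * 2)) := by
          rintro rfl; exact hvi1 hvt1.symm
        have ht2z : t2 ≠ (⟨0, hz⟩ : Fin (k * 2)) := by
          rintro rfl; exact hvi2 hvt2.symm
        have hx1 : x.1 t1 = x.1 ⟨0, by omega⟩ := by
          rw [he1]; simp [Equiv.swap_apply_of_ne_of_ne ht1z ht1, hvt1]
        have hy1 : y.1 t2 = y.1 ⟨0, by omega⟩ := by
          rw [he2]; simp [Equiv.swap_apply_of_ne_of_ne ht2z ht2, hvt2]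
        have hsx : t1 = sig x := huniq x t1 (fun h => ht1z (Fin.ext h)) hx1
        have hsy : t2 = sig y := huniq y t2 (fun h => ht2z (Fin.ext h)) hy1
        have htt : t1 = t2 := by rw [hsx, hsy, hxy]
        have hii : i1 = i2 := by
          refine two_uniq v t1 i1 i2 (Ne.symm ht1) ?_ hvt1.symm ?_
          · rw [htt]; exact Ne.symm ht2
          · rw [htt]; exact hvt2.symm
        exact Subtype.ext (by rw [he1, he2, hii])
  · -- surjectivity on closed neighborhoods
    intro v c hc
    by_cases hcase : c = sig v
    · exact ⟨v, Set.mem_insert _ _, hcase.symm⟩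
    · have hvc : v.1 c ≠ v.1 ⟨0, by omega⟩ := fun h => hcase (huniq v c hc h)
      obtain ⟨i, hic, hvi⟩ := other_pos v c
      have hiz : i ≠ (⟨0, hz⟩ : Fin (k * 2)) := by
        rintro rfl; exact hvc hvi.symm
      refine ⟨⟨v.1 ∘ Equiv.swap ⟨0, by omega⟩ i, isMSP_comp v.2 _⟩, ?_, ?_⟩
      · refine Set.mem_insert_of_mem _ ?_
        exact adj_of hk v _ i (fun h => hiz (Fin.ext h)) (by rw [hvi]; exact hvc) rfl
      · have hcz : c ≠ (⟨0, by omega⟩ : Fin (k * 2)) := fun h => hc (by rw [h])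
        refine (huniq _ c hc ?_).symm
        show v.1 (Equiv.swap _ i c) = v.1 (Equiv.swap _ i ⟨0, by omega⟩)
        rw [Equiv.swap_apply_of_ne_of_ne hcz (Ne.symm hic), Equiv.swap_apply_left]
        exact hvi.symm
  · -- color classes
    intro i hi
    ext v
    simp only [Set.mem_setOf_eq]
    constructor
    · intro h
      rw [← h]
      exact (hsig v).2.symm
    · intro h
      exact (huniq v i hi h.symm).symm
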